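/- Let α₁, …, α_N ∈ V* (N ≥ 1) and c₁, …, c_N > 0, and define F : V → ℝ by F(x) = Σᵢ cᵢ · e^{αᵢ(x)} (note F > 0 everywhere, so log F is defined). Then the stability set of log F equals the interior of the convex hull of {α₁, …, α_N} in V*: S_{log F} = int(conv{α₁, …, α_N}). (Corollary to Proposition 3.) -/

import Mathlib

/-- A function `F` on a normed space is *stable* if `F x → +∞` as `‖x‖ → ∞`. -/
def Stable {V : Type*} [NormedAddCommGroup V] (F : V → ℝ) : Prop :=
  Filter.Tendsto F (Bornology.cobounded V) Filter.atTop

/-- The stability set of `F`: the set of continuous linear functionals `ℓ` such that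
`F - ℓ` is stable. -/
def stabilitySet {V : Type*} [NormedAddCommGroup V] [NormedSpace ℝ V] (F : V → ℝ) :
    Set (V →L[ℝ] ℝ) :=
  {ℓ : V →L[ℝ] ℝ | Stable fun x => F x - ℓ x}

section AuxLemmas

lemma exists_eval_point {V : Type*} [NormedAddCommGroup V] [NormedSpace ℝ V]
    [FiniteDimensional ℝ V] (Φ : (V →L[ℝ] ℝ) →L[ℝ] ℝ) :
    ∃ v : V, ∀ β : V →L[ℝ] ℝ, β v = Φ β := by
  classical
  set T : (V →ₗ[ℝ] ℝ) ≃ₗ[ℝ] (V →L[ℝ] ℝ) := LinearMap.toContinuousLinearMap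
  refine ⟨(Module.evalEquiv ℝ V).symm (Φ.toLinearMap ∘ₗ T.toLinearMap), fun β => ?_⟩
  have h := Module.apply_evalEquiv_symm_apply ℝ V (β : V →ₗ[ℝ] ℝ)
      (Φ.toLinearMap ∘ₗ T.toLinearMap)
  have h2 : T (β : V →ₗ[ℝ] ℝ) = β := T.apply_symm_apply β
  calc β ((Module.evalEquiv ℝ V).symm (Φ.toLinearMap ∘ₗ T.toLinearMap))
      = (β : V →ₗ[ℝ] ℝ) ((Module.evalEquiv ℝ V).symm (Φ.toLinearMap ∘ₗ T.toLinearMap)) := rfl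
    _ = (Φ.toLinearMap ∘ₗ T.toLinearMap) (β : V →ₗ[ℝ] ℝ) := h
    _ = Φ (T (β : V →ₗ[ℝ] ℝ)) := rfl
    _ = Φ β := by rw [h2]

-- support bound: any element of the convex hull is dominated by the sup'
lemma hull_eval_le {V : Type*} [NormedAddCommGroup V] [NormedSpace ℝ V] {N : ℕ}
    (hne : (Finset.univ : Finset (Fin N)).Nonempty)
    (α : Fin N → V →L[ℝ] ℝ) (x : V) {β : V →L[ℝ] ℝ}
    (hβ : β ∈ convexHull ℝ (Set.range α)) :
    β x ≤ Finset.univ.sup' hne (fun i => α i x) := by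
  have hconv : Convex ℝ {γ : V →L[ℝ] ℝ | γ x ≤ Finset.univ.sup' hne (fun i => α i x)} := by
    refine convex_halfSpace_le ⟨fun f g => rfl, fun r f => rfl⟩ _
  refine convexHull_min ?_ hconv hβ
  rintro γ ⟨i, rfl⟩
  exact Finset.le_sup' (fun i => α i x) (Finset.mem_univ i)

-- separation: if ℓ is not in the interior of the hull, there is a direction v
lemma exists_sep {V : Type*} [NormedAddCommGroup V] [NormedSpace ℝ V]
    [FiniteDimensional ℝ V] {N : ℕ} (hN : 1 ≤ N) (α : Fin N → V →L[ℝ] ℝ)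
    {ℓ : V →L[ℝ] ℝ} (hℓ : ℓ ∉ interior (convexHull ℝ (Set.range α))) :
    ∃ v : V, v ≠ 0 ∧ ∀ i, α i v ≤ ℓ v := by
  classical
  have hN0 : Nonempty (Fin N) := ⟨⟨0, hN⟩⟩
  set K := convexHull ℝ (Set.range α) with hK
  have hKconv : Convex ℝ K := convex_convexHull ℝ _
  -- produce Φ : dual of dual, nonzero, with Φ (α i) ≤ Φ ℓ
  have main : ∃ Φ : (V →L[ℝ] ℝ) →L[ℝ] ℝ, Φ ≠ 0 ∧ ∀ i, Φ (α i) ≤ Φ ℓ := by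
    rcases (interior K).eq_empty_or_nonempty with hint | ⟨b₀, hb₀⟩
    · -- empty interior: hull spans a proper affine subspace
      have hne : (Set.range α).Nonempty := Set.range_nonempty α
      have hspan : affineSpan ℝ (Set.range α) ≠ ⊤ := by
        intro htop
        have : (interior K).Nonempty := by
          rw [hK, hKconv.interior_nonempty_iff_affineSpan_eq_top, affineSpan_convexHull]
          exact htop
        simp [hint] at this
      have hvs : vectorSpan ℝ (Set.range α) ≠ ⊤ := by
        intro htop
        exact hspan ((AffineSubspace.affineSpan_eq_top_iff_vectorSpan_eq_top_of_nonempty ℝ _ _ hne).mpr htop)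
      obtain ⟨f, hf0, hfmap⟩ := (vectorSpan ℝ (Set.range α)).exists_dual_map_eq_bot_of_lt_top
        hvs.lt_top inferInstance
      have hfconst : ∀ i, f (α i) = f (α ⟨0, hN⟩) := by
        intro i
        have hmem : α i - α ⟨0, hN⟩ ∈ vectorSpan ℝ (Set.range α) := by
          have := vsub_mem_vectorSpan ℝ (Set.mem_range_self (f := α) i)
            (Set.mem_range_self (f := α) ⟨0, hN⟩)
          simpa using this
        have : f (α i - α ⟨0, hN⟩) = 0 := by
          have : f (α i - α ⟨0, hN⟩) ∈ (vectorSpan ℝ (Set.range α)).map f :=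
            Submodule.mem_map_of_mem hmem
          rw [hfmap] at this
          simpa using this
        have := this
        rw [map_sub] at this
        linarith
      set d := f (α ⟨0, hN⟩) with hd
      set Φ₀ : (V →L[ℝ] ℝ) →L[ℝ] ℝ := LinearMap.toContinuousLinearMap f with hΦ₀
      have hΦ₀ne : Φ₀ ≠ 0 := by
        intro h
        apply hf0
        ext β
        have : Φ₀ β = 0 := by rw [h]; rfl
        simpa [hΦ₀] using this
      by_cases hcase : d ≤ f ℓ
      · refine ⟨Φ₀, hΦ₀ne, fun i => ?_⟩
        show f (α i) ≤ f ℓ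
        rw [hfconst i]; exact hcase
      · refine ⟨-Φ₀, by intro h; apply hΦ₀ne; ext β; have := congrArg (fun g => g β) h; simpa using this, fun i => ?_⟩
        show -(f (α i)) ≤ -(f ℓ)
        rw [hfconst i]
        push_neg at hcase
        linarith
    · -- nonempty interior: Hahn-Banach separation from the open interior
      obtain ⟨Φ, hΦ⟩ := geometric_hahn_banach_open_point hKconv.interior isOpen_interior hℓ
      have hΦne : Φ ≠ 0 := by
        intro h
        have := hΦ b₀ hb₀
        rw [h] at this
        simp at this
      refine ⟨Φ, hΦne, fun i => ?_⟩
      -- α i ∈ K; move slightly towards b₀ to land in the interior, take limits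
      have hαK : α i ∈ K := subset_convexHull ℝ _ (Set.mem_range_self i)
      have key : ∀ t : ℝ, t ∈ Set.Ioc (0:ℝ) 1 → Φ (α i + t • (b₀ - α i)) ≤ Φ ℓ :=
        fun t ht => le_of_lt (hΦ _ (hKconv.add_smul_sub_mem_interior hαK hb₀ ht))
      have hcont : Filter.Tendsto (fun t : ℝ => Φ (α i + t • (b₀ - α i))) (nhdsWithin 0 (Set.Ioc 0 1))
          (nhds (Φ (α i))) := by
        have : Filter.Tendsto (fun t : ℝ => Φ (α i + t • (b₀ - α i))) (nhds 0)
            (nhds (Φ (α i + (0:ℝ) • (b₀ - α i)))) := by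
          apply Continuous.tendsto
          exact Φ.continuous.comp (continuous_const.add (continuous_id.smul continuous_const))
        simpa using this.mono_left nhdsWithin_le_nhds
      have hnb : (nhdsWithin (0:ℝ) (Set.Ioc 0 1)).NeBot := by
        apply mem_closure_iff_nhdsWithin_neBot.mp
        have : (0:ℝ) ∈ closure (Set.Ioc (0:ℝ) 1) := by
          rw [closure_Ioc (by norm_num : (0:ℝ) ≠ 1)]
          simp
        exact this
      exact le_of_tendsto hcont (eventually_nhdsWithin_of_forall key)
  obtain ⟨Φ, hΦne, hΦle⟩ := main
  obtain ⟨v, hv⟩ := exists_eval_point Φ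
  refine ⟨v, ?_, fun i => by rw [hv, hv]; exact hΦle i⟩
  intro h0
  apply hΦne
  ext β
  have := hv β
  rw [h0] at this
  simp at this
  simp [← this]

end AuxLemmas

/-- Corollary to Proposition 3: the stability set of `log (Σᵢ cᵢ e^{αᵢ(x)})` is the
interior of the convex hull of the `αᵢ` in `V*`. -/
theorem stabilitySet_log_exp_sum {V : Type*} [NormedAddCommGroup V]
    [InnerProductSpace ℝ V] [FiniteDimensional ℝ V] {N : ℕ} (hN : 1 ≤ N)
    (α : Fin N → V →L[ℝ] ℝ) (c : Fin N → ℝ) (hc : ∀ i, 0 < c i) :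
    stabilitySet (fun x : V => Real.log (∑ i, c i * Real.exp (α i x))) =
      interior (convexHull ℝ (Set.range α)) := by
  classical
  have hN0 : Nonempty (Fin N) := ⟨⟨0, hN⟩⟩
  have hne : (Finset.univ : Finset (Fin N)).Nonempty := Finset.univ_nonempty
  set F : V → ℝ := fun x => Real.log (∑ i, c i * Real.exp (α i x)) with hF
  have hsumpos : ∀ x : V, 0 < ∑ i, c i * Real.exp (α i x) := fun x =>
    Finset.sum_pos (fun i _ => mul_pos (hc i) (Real.exp_pos _)) hne
  have hlow : ∀ (x : V) (i : Fin N), Real.log (c i) + α i x ≤ F x := by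
    intro x i
    have h1 : c i * Real.exp (α i x) ≤ ∑ j, c j * Real.exp (α j x) :=
      Finset.single_le_sum (f := fun j => c j * Real.exp (α j x))
        (fun j _ => le_of_lt (mul_pos (hc j) (Real.exp_pos _))) (Finset.mem_univ i)
    calc Real.log (c i) + α i x = Real.log (c i * Real.exp (α i x)) := by
          rw [Real.log_mul (ne_of_gt (hc i)) (Real.exp_ne_zero _), Real.log_exp]
      _ ≤ F x := Real.log_le_log (mul_pos (hc i) (Real.exp_pos _)) h1
  ext ℓ
  simp only [stabilitySet, Stable, Set.mem_setOf_eq]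
  constructor
  · -- stability implies interior membership
    intro hstab
    by_contra hint
    obtain ⟨v, hv0, hvle⟩ := exists_sep hN α hint
    set M := Real.log (∑ i, c i) with hM
    have hub : ∀ t : ℝ, 0 ≤ t → F (t • v) - ℓ (t • v) ≤ M := by
      intro t ht
      have h1 : ∑ i, c i * Real.exp (α i (t • v)) ≤ (∑ i, c i) * Real.exp (ℓ (t • v)) := by
        rw [Finset.sum_mul]
        refine Finset.sum_le_sum fun i _ => ?_
        refine mul_le_mul_of_nonneg_left (Real.exp_le_exp.mpr ?_) (le_of_lt (hc i))
        rw [map_smul, map_smul, smul_eq_mul, smul_eq_mul]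
        exact mul_le_mul_of_nonneg_left (hvle i) ht
      have h2 : F (t • v) ≤ Real.log ((∑ i, c i) * Real.exp (ℓ (t • v))) :=
        Real.log_le_log (hsumpos _) h1
      rw [Real.log_mul (ne_of_gt (Finset.sum_pos (fun i _ => hc i) hne))
        (Real.exp_ne_zero _), Real.log_exp] at h2
      linarith
    have htv : Filter.Tendsto (fun t : ℝ => t • v) Filter.atTop (Bornology.cobounded V) := by
      rw [← tendsto_norm_atTop_iff_cobounded]
      have heq : ∀ᶠ t : ℝ in Filter.atTop, t * ‖v‖ = ‖t • v‖ := by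
        filter_upwards [Filter.eventually_ge_atTop (0:ℝ)] with t ht
        rw [norm_smul, Real.norm_of_nonneg ht]
      exact Filter.Tendsto.congr' heq
        (Filter.Tendsto.atTop_mul_const (norm_pos_iff.mpr hv0) Filter.tendsto_id)
    have hev := (hstab.comp htv).eventually (Filter.eventually_ge_atTop (M + 1))
    obtain ⟨t, ht1, ht0⟩ := (hev.and (Filter.eventually_ge_atTop (0:ℝ))).exists
    have := hub t ht0
    simp only [Function.comp_apply] at ht1
    linarith
  · -- interior membership implies stability
    intro hℓ
    obtain ⟨ε, hε, hball⟩ := Metric.mem_nhds_iff.mp (mem_interior_iff_mem_nhds.mp hℓ)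
    have hsupp : ∀ x : V, ε / 2 * ‖x‖ ≤ Finset.univ.sup' hne (fun i => α i x) - ℓ x := by
      intro x
      rcases eq_or_ne x 0 with rfl | hx
      · obtain ⟨i, -, hi⟩ := Finset.exists_mem_eq_sup' hne (fun i => α i (0:V))
        simp [hi]
      · have hxn : (0:ℝ) < ‖x‖ := norm_pos_iff.mpr hx
        set u : V →L[ℝ] ℝ := (InnerProductSpace.toDual ℝ V) ((ε / 2 / ‖x‖) • x) with hu
        have hunorm : ‖u‖ = ε / 2 := by
          rw [hu, (InnerProductSpace.toDual ℝ V).norm_map, norm_smul,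
            Real.norm_of_nonneg (by positivity), div_mul_cancel₀]
          exact ne_of_gt hxn
        have hmem : ℓ + u ∈ convexHull ℝ (Set.range α) := by
          apply hball
          rw [Metric.mem_ball, dist_eq_norm]
          simpa [hunorm] using by linarith
        have hle := hull_eval_le hne α x hmem
        have hux : u x = ε / 2 * ‖x‖ := by
          rw [hu, InnerProductSpace.toDual_apply_apply, real_inner_smul_left,
            real_inner_self_eq_norm_mul_norm]
          field_simp
        have : (ℓ + u) x = ℓ x + u x := rfl
        rw [this, hux] at hle
        linarith
    set Cmin : ℝ := Finset.univ.inf' hne (fun i => Real.log (c i)) with hCmin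
    have hlb : ∀ x : V, Cmin + ε / 2 * ‖x‖ ≤ F x - ℓ x := by
      intro x
      obtain ⟨i, -, hi⟩ := Finset.exists_mem_eq_sup' hne (fun i => α i x)
      have h1 := hlow x i
      have h2 : Cmin ≤ Real.log (c i) := Finset.inf'_le _ (Finset.mem_univ i)
      have h3 := hsupp x
      rw [hi] at h3
      linarith
    have hg : Filter.Tendsto (fun x : V => Cmin + ε / 2 * ‖x‖)
        (Bornology.cobounded V) Filter.atTop := by
      apply Filter.tendsto_atTop_add_const_left
      exact Filter.Tendsto.const_mul_atTop (by linarith) tendsto_norm_cobounded_atTop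
    exact Filter.tendsto_atTop_mono hlb hg
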